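/- Let A be an m × n matrix with rational entries that is totally unimodular, and let b be a vector in ℚ^m all of whose entries are integers. Then every extreme point of the polyhedron P = { x ∈ ℚ^n : A x ≤ b (componentwise) } has all entries integer. -/

import Mathlib

/-- Hoffman–Kruskal integrality: if `A` is totally unimodular and `b` is an integer vector,
then every extreme point of `P = {x : A x ≤ b}` has all entries integer. -/
theorem totallyUnimodular_extreme_point_integral_le {m n : ℕ}
    (A : Matrix (Fin m) (Fin n) ℚ) (hA : A.IsTotallyUnimodular)
    (b : Fin m → ℚ) (hb : ∀ i : Fin m, ∃ z : ℤ, b i = (z : ℚ))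
    (P : Set (Fin n → ℚ)) (hP : P = {x : Fin n → ℚ | A.mulVec x ≤ b})
    (x : Fin n → ℚ)
    (hxP : x ∈ P)
    (hext : ∀ y ∈ P, ∀ z ∈ P, ∀ t : ℚ, 0 < t → t < 1 →
      x = t • y + (1 - t) • z → y = x ∧ z = x) :
    ∀ j : Fin n, ∃ k : ℤ, x j = (k : ℚ) := by
  classical
  subst hP
  have hxb : ∀ i, A.mulVec x i ≤ b i := hxP
  -- Step 1: any direction vanishing on all tight rows is zero (by extremality)
  have hker : ∀ w : Fin n → ℚ, (∀ i, A.mulVec x i = b i → A.mulVec w i = 0) → w = 0 := by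
    intro w hw
    set s : Fin m → ℚ := fun i =>
      if A.mulVec w i = 0 then 1 else (b i - A.mulVec x i) / |A.mulVec w i| with hs
    set F : Finset ℚ := insert 1 (Finset.univ.image s) with hF
    have hFne : F.Nonempty := ⟨1, Finset.mem_insert_self _ _⟩
    set ε : ℚ := F.min' hFne with hε
    have hspos : ∀ i, 0 < s i := by
      intro i
      by_cases h : A.mulVec w i = 0
      · simp [hs, h]
      · have hi : A.mulVec x i < b i :=
          lt_of_le_of_ne (hxb i) (fun hEq => h (hw i hEq))
        simp only [hs, if_neg h]
        exact div_pos (by linarith) (abs_pos.mpr h)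
    have hεpos : 0 < ε := by
      have hmem := F.min'_mem hFne
      rcases Finset.mem_insert.mp hmem with h | h
      · rw [← hε] at h; rw [h]; norm_num
      · obtain ⟨i, -, hi⟩ := Finset.mem_image.mp h
        rw [← hε] at hi; rw [← hi]; exact hspos i
    have hεle : ∀ i, ε ≤ s i := fun i =>
      F.min'_le _ (Finset.mem_insert_of_mem (Finset.mem_image_of_mem s (Finset.mem_univ i)))
    have hbound : ∀ i, ε * |A.mulVec w i| ≤ b i - A.mulVec x i ∨ A.mulVec w i = 0 := by
      intro i
      by_cases h : A.mulVec w i = 0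
      · exact Or.inr h
      · left
        have h1 : 0 < |A.mulVec w i| := abs_pos.mpr h
        have h2 : ε ≤ (b i - A.mulVec x i) / |A.mulVec w i| := by
          have h3 := hεle i
          simp only [hs, if_neg h] at h3
          exact h3
        calc ε * |A.mulVec w i| ≤ ((b i - A.mulVec x i) / |A.mulVec w i|) * |A.mulVec w i| :=
              mul_le_mul_of_nonneg_right h2 h1.le
          _ = b i - A.mulVec x i := div_mul_cancel₀ _ h1.ne'
    have hmemy : ∀ σ : ℚ, |σ| = 1 → x + (σ * ε) • w ∈ {x : Fin n → ℚ | A.mulVec x ≤ b} := by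
      intro σ hσ i
      simp only [Set.mem_setOf_eq]
      rw [Matrix.mulVec_add, Matrix.mulVec_smul]
      simp only [Pi.add_apply, Pi.smul_apply, smul_eq_mul]
      rcases hbound i with hle | h0
      · have h4 : σ * ε * A.mulVec w i ≤ ε * |A.mulVec w i| := by
          calc σ * ε * A.mulVec w i ≤ |σ * ε * A.mulVec w i| := le_abs_self _
            _ = ε * |A.mulVec w i| := by
                rw [abs_mul, abs_mul, hσ, one_mul, abs_of_pos hεpos]
        linarith
      · rw [h0, mul_zero, add_zero]; exact hxb i
    have hy := hmemy 1 (by norm_num)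
    have hz := hmemy (-1) (by norm_num)
    have hcomb : x = (1/2 : ℚ) • (x + (1 * ε) • w) + (1 - 1/2 : ℚ) • (x + ((-1) * ε) • w) := by
      funext j
      simp only [Pi.add_apply, Pi.smul_apply, smul_eq_mul]
      ring
    obtain ⟨h5, -⟩ := hext _ hy _ hz (1/2) (by norm_num) (by norm_num) hcomb
    have h6 : (1 * ε) • w = 0 := by
      have := congrArg (· - x) h5
      simpa [add_sub_cancel_left] using this
    rcases smul_eq_zero.mp h6 with h | h
    · exact absurd h (by simpa using hεpos.ne')
    · exact h
  -- Step 2: the tight rows span `ℚ^n`; extract an invertible square submatrix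
  set T := {i : Fin m // A.mulVec x i = b i} with hT
  set M : Matrix T (Fin n) ℚ := A.submatrix Subtype.val id with hM
  have hMV : ∀ (w : Fin n → ℚ) (i : T), M.mulVec w i = A.mulVec w i.val := fun w i => rfl
  have hMinj : Function.Injective M.mulVecLin := by
    rw [← LinearMap.ker_eq_bot, LinearMap.ker_eq_bot']
    intro w hw
    exact hker w (fun i hi => by
      have := congrFun hw ⟨i, hi⟩
      rwa [Matrix.mulVecLin_apply, hMV] at this)
  have hrank : M.rank = n := by
    rw [Matrix.rank, LinearMap.finrank_range_of_inj hMinj, Module.finrank_fin_fun]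
  have hspan : Submodule.span ℚ (Set.range M) = ⊤ := by
    apply Submodule.eq_top_of_finrank_eq
    rw [show Set.range M = Set.range M.row from rfl, ← Matrix.rank_eq_finrank_span_row, hrank, Module.finrank_fin_fun]
  obtain ⟨t, hts, htspan, htli⟩ := exists_linearIndependent ℚ (Set.range M)
  rw [hspan] at htspan
  let bas : Module.Basis t ℚ (Fin n → ℚ) := Module.Basis.mk htli (by rw [Subtype.range_coe, htspan])
  haveI : Finite t := htli.finite
  haveI : Fintype t := Fintype.ofFinite _
  have hcard : Fintype.card t = n := by
    have h1 := Module.finrank_eq_card_basis bas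
    rw [Module.finrank_fin_fun] at h1
    exact h1.symm
  let e : Fin n ≃ t := (Fintype.equivFinOfCardEq hcard).symm
  have hpick : ∀ v : t, ∃ i : T, M i = (v : Fin n → ℚ) := fun v => hts v.2
  choose f hf using hpick
  let g : Fin n → Fin m := fun k => (f (e k)).val
  have hg_tight : ∀ k, A.mulVec x (g k) = b (g k) := fun k => (f (e k)).2
  have hginj : Function.Injective g := by
    intro k k' h
    have h1 : f (e k) = f (e k') := Subtype.ext h
    have h2 : ((e k : t) : Fin n → ℚ) = ((e k' : t) : Fin n → ℚ) := by
      rw [← hf (e k), ← hf (e k'), h1]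
    exact e.injective (Subtype.ext h2)
  set B : Matrix (Fin n) (Fin n) ℚ := A.submatrix g id with hB
  have hBrow : ∀ k, B k = ((e k : t) : Fin n → ℚ) := fun k => hf (e k)
  have hBli : LinearIndependent ℚ (fun k => B k) := by
    have h1 : LinearIndependent ℚ (((↑) : t → (Fin n → ℚ)) ∘ e) := htli.comp e e.injective
    have h2 : (fun k => B k) = (((↑) : t → (Fin n → ℚ)) ∘ e) := funext fun k => hBrow k
    rwa [h2]
  have hdet0 : B.det ≠ 0 := by
    intro h
    obtain ⟨v, hv0, hv⟩ := Matrix.exists_vecMul_eq_zero_iff.mpr h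
    apply hv0
    have hsum : ∑ k, v k • B k = 0 := by
      funext j
      have h1 := congrFun hv j
      simpa [Matrix.vecMul, dotProduct, Finset.sum_apply, mul_comm] using h1
    exact funext (Fintype.linearIndependent_iff.mp hBli v hsum)
  have hdet : B.det = 1 ∨ B.det = -1 := by
    obtain ⟨sg, hsg⟩ := hA n g id hginj Function.injective_id
    rcases sg with _ | _ | _
    · exact absurd hsg.symm (by simpa using hdet0)
    · right; rw [← hsg]; simp
    · left; rw [← hsg]; simp
  set c : Fin n → ℚ := fun k => b (g k) with hc
  have hBx : B.mulVec x = c := funext fun k => hg_tight k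
  have key : B.det • x = B.adjugate.mulVec c := by
    rw [← hBx, Matrix.mulVec_mulVec, Matrix.adjugate_mul, Matrix.smul_mulVec,
      Matrix.one_mulVec]
  -- Step 3: integrality via the adjugate of an integer matrix
  have hBint : ∀ k j, ∃ z : ℤ, B k j = (z : ℚ) := by
    intro k j
    obtain ⟨sg, hsg⟩ := hA.apply (g k) j
    exact ⟨(sg : ℤ), by rw [show B k j = A (g k) j from rfl, ← hsg]; cases sg <;> simp⟩
  choose NB hNB using fun k => hBint k
  have hBmap : B = (Int.castRingHom ℚ).mapMatrix (Matrix.of NB) := by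
    ext k j
    exact hNB k j
  have hadjint : ∀ k j, ∃ z : ℤ, B.adjugate k j = (z : ℚ) := by
    intro k j
    refine ⟨(Matrix.of NB).adjugate k j, ?_⟩
    rw [hBmap, ← RingHom.map_adjugate]
    rfl
  intro j
  have hvint : ∃ z : ℤ, (B.adjugate.mulVec c) j = (z : ℚ) := by
    have h1 : (B.adjugate.mulVec c) j = ∑ k, B.adjugate j k * c k := rfl
    choose za hza using fun k => hadjint j k
    choose zc hzc using fun k => hb (g k)
    refine ⟨∑ k, za k * zc k, ?_⟩
    rw [h1]
    push_cast
    exact Finset.sum_congr rfl fun k _ => by rw [hza]; simp only [hc]; rw [hzc]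
  obtain ⟨z, hz⟩ := hvint
  have hxj := congrFun key j
  simp only [Pi.smul_apply, smul_eq_mul] at hxj
  rcases hdet with h | h
  · exact ⟨z, by rw [h, one_mul] at hxj; rw [hxj, hz]⟩
  · refine ⟨-z, ?_⟩
    rw [h] at hxj
    push_cast
    linarith [hz ▸ hxj]
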